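/- Let n = (n_1, n_2, n_3) ∈ ℝ[u, v]^3 be nonzero and such that every common divisor of n_1, n_2, n_3 in ℝ[u, v] is a unit. Let q, r ∈ Syz(n). Then (q, r) form a basis of the ℝ[u, v]-module Syz(n) if and only if there exists a nonzero constant c ∈ ℝ such that q × r = c · n, where × denotes the cross product (q × r)_1 = q_2 r_3 − q_3 r_2, (q × r)_2 = q_3 r_1 − q_1 r_3, (q × r)_3 = q_1 r_2 − q_2 r_1 computed in ℝ[u, v]. -/

import Mathlib

/-- The syzygy module of a polynomial vector field `n = (n₁,n₂,n₃) ∈ ℝ[u,v]³`: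
all `q ∈ ℝ[u,v]³` with `q₁n₁ + q₂n₂ + q₃n₃ = 0`. -/
noncomputable def Syz (n : Fin 3 → MvPolynomial (Fin 2) ℝ) :
    Submodule (MvPolynomial (Fin 2) ℝ) (Fin 3 → MvPolynomial (Fin 2) ℝ) where
  carrier := {q | ∑ i, q i * n i = 0}
  add_mem' := by
    intro a b ha hb
    simp only [Set.mem_setOf_eq] at *
    simp [Pi.add_apply, add_mul, Finset.sum_add_distrib, ha, hb]
  zero_mem' := by simp
  smul_mem' := by
    intro c a ha
    simp only [Set.mem_setOf_eq] at *
    simp [Pi.smul_apply, smul_eq_mul, mul_assoc, ← Finset.mul_sum, ha]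

/-- The cross product of triples of polynomials, computed in `ℝ[u,v]`. -/
noncomputable def cross (a b : Fin 3 → MvPolynomial (Fin 2) ℝ) :
    Fin 3 → MvPolynomial (Fin 2) ℝ :=
  ![a 1 * b 2 - a 2 * b 1, a 2 * b 0 - a 0 * b 2, a 0 * b 1 - a 1 * b 0]

namespace SyzAux

open MvPolynomial

local notation "P" => MvPolynomial (Fin 2) ℝ

lemma mem_Syz {n x : Fin 3 → P} :
    x ∈ Syz n ↔ x 0 * n 0 + x 1 * n 1 + x 2 * n 2 = 0 := by
  change (∑ i, x i * n i = 0) ↔ _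
  rw [Fin.sum_univ_three]

lemma cross_zero (a b : Fin 3 → P) : cross a b 0 = a 1 * b 2 - a 2 * b 1 := rfl
lemma cross_one (a b : Fin 3 → P) : cross a b 1 = a 2 * b 0 - a 0 * b 2 := rfl
lemma cross_two (a b : Fin 3 → P) : cross a b 2 = a 0 * b 1 - a 1 * b 0 := rfl

/-- `n × (s × t) = 0` when `s, t ⟂ n`: the cross product of two syzygies is
proportional to `n` componentwise. -/
lemma cross_rel (n s t : Fin 3 → P)
    (hs' : s 0 * n 0 + s 1 * n 1 + s 2 * n 2 = 0)
    (ht' : t 0 * n 0 + t 1 * n 1 + t 2 * n 2 = 0) :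
    ∀ i j, cross s t i * n j = cross s t j * n i := by
  have h01 : cross s t 0 * n 1 = cross s t 1 * n 0 := by
    rw [cross_zero, cross_one]; linear_combination t 2 * hs' - s 2 * ht'
  have h02 : cross s t 0 * n 2 = cross s t 2 * n 0 := by
    rw [cross_zero, cross_two]; linear_combination s 1 * ht' - t 1 * hs'
  have h12 : cross s t 1 * n 2 = cross s t 2 * n 1 := by
    rw [cross_one, cross_two]; linear_combination t 0 * hs' - s 0 * ht'
  intro i j
  fin_cases i <;> fin_cases j <;>
    first
      | rfl
      | exact h01 | exact h01.symm
      | exact h02 | exact h02.symm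
      | exact h12 | exact h12.symm

/-- Cofactor expansion: four vectors in 3-space are dependent. -/
lemma det_expand (s q r : Fin 3 → P) (i j : Fin 3) :
    s i * cross q r j - q i * cross s r j + r i * cross s q j =
      if i = j then s 0 * cross q r 0 + s 1 * cross q r 1 + s 2 * cross q r 2 else 0 := by
  have d00 : s 0 * cross q r 0 - q 0 * cross s r 0 + r 0 * cross s q 0 =
      s 0 * cross q r 0 + s 1 * cross q r 1 + s 2 * cross q r 2 := by
    simp only [cross_zero, cross_one, cross_two]; ring
  have d11 : s 1 * cross q r 1 - q 1 * cross s r 1 + r 1 * cross s q 1 =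
      s 0 * cross q r 0 + s 1 * cross q r 1 + s 2 * cross q r 2 := by
    simp only [cross_zero, cross_one, cross_two]; ring
  have d22 : s 2 * cross q r 2 - q 2 * cross s r 2 + r 2 * cross s q 2 =
      s 0 * cross q r 0 + s 1 * cross q r 1 + s 2 * cross q r 2 := by
    simp only [cross_zero, cross_one, cross_two]; ring
  have d01 : s 0 * cross q r 1 - q 0 * cross s r 1 + r 0 * cross s q 1 = 0 := by
    simp only [cross_one]; ring
  have d02 : s 0 * cross q r 2 - q 0 * cross s r 2 + r 0 * cross s q 2 = 0 := by
    simp only [cross_two]; ring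
  have d10 : s 1 * cross q r 0 - q 1 * cross s r 0 + r 1 * cross s q 0 = 0 := by
    simp only [cross_zero]; ring
  have d12 : s 1 * cross q r 2 - q 1 * cross s r 2 + r 1 * cross s q 2 = 0 := by
    simp only [cross_two]; ring
  have d20 : s 2 * cross q r 0 - q 2 * cross s r 0 + r 2 * cross s q 0 = 0 := by
    simp only [cross_zero]; ring
  have d21 : s 2 * cross q r 1 - q 2 * cross s r 1 + r 2 * cross s q 1 = 0 := by
    simp only [cross_one]; ring
  fin_cases i <;> fin_cases j
  · rw [if_pos rfl]; exact d00
  · rw [if_neg (by decide)]; exact d01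
  · rw [if_neg (by decide)]; exact d02
  · rw [if_neg (by decide)]; exact d10
  · rw [if_pos rfl]; exact d11
  · rw [if_neg (by decide)]; exact d12
  · rw [if_neg (by decide)]; exact d20
  · rw [if_neg (by decide)]; exact d21
  · rw [if_pos rfl]; exact d22

/-- The cross product of two syzygies of `n` is a polynomial multiple of `n`. -/
lemma cross_eq_smul (n : Fin 3 → P) (hn : n ≠ 0)
    (hgcd : ∀ d : P, d ∣ n 0 → d ∣ n 1 → d ∣ n 2 → IsUnit d)
    (s t : Fin 3 → P)
    (hs' : s 0 * n 0 + s 1 * n 1 + s 2 * n 2 = 0)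
    (ht' : t 0 * n 0 + t 1 * n 1 + t 2 * n 2 = 0) :
    ∃ f : P, ∀ i, cross s t i = f * n i := by
  classical
  letI : GCDMonoid P := UniqueFactorizationMonoid.toGCDMonoid P
  have hw := cross_rel n s t hs' ht'
  have hdvd : ∀ i, n i ∣ cross s t i := by
    intro i
    set w := cross s t i with hwdef
    have h0 : n i ∣ w * n 0 := by rw [hw i 0]; exact dvd_mul_left _ _
    have h1 : n i ∣ w * n 1 := by rw [hw i 1]; exact dvd_mul_left _ _
    have h2 : n i ∣ w * n 2 := by rw [hw i 2]; exact dvd_mul_left _ _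
    have A1 : Associated (gcd (w * n 1) (w * n 2)) (w * gcd (n 1) (n 2)) :=
      gcd_mul_left' w (n 1) (n 2)
    have hx : n i ∣ w * gcd (n 1) (n 2) :=
      (A1.dvd_iff_dvd_right).mp (dvd_gcd h1 h2)
    have A2 : Associated (gcd (w * n 0) (w * gcd (n 1) (n 2)))
        (w * gcd (n 0) (gcd (n 1) (n 2))) := gcd_mul_left' w _ _
    have hy : n i ∣ w * gcd (n 0) (gcd (n 1) (n 2)) :=
      (A2.dvd_iff_dvd_right).mp (dvd_gcd h0 hx)
    have hG : IsUnit (gcd (n 0) (gcd (n 1) (n 2))) :=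
      hgcd _ (gcd_dvd_left _ _) ((gcd_dvd_right _ _).trans (gcd_dvd_left _ _))
        ((gcd_dvd_right _ _).trans (gcd_dvd_right _ _))
    have : w * gcd (n 0) (gcd (n 1) (n 2)) ∣ w * 1 := mul_dvd_mul_left w hG.dvd
    rw [mul_one] at this
    exact hy.trans this
  obtain ⟨i₀, hi₀⟩ := Function.ne_iff.mp hn
  have hi₀ : n i₀ ≠ 0 := by simpa using hi₀
  obtain ⟨f, hf⟩ := hdvd i₀
  refine ⟨f, fun j => ?_⟩
  apply mul_left_cancel₀ hi₀
  linear_combination hw j i₀ + n j * hf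

/-- Units of `ℝ[u,v]` are nonzero constants. -/
lemma exists_C_of_isUnit {f : P} (h : IsUnit f) :
    ∃ c : ℝ, c ≠ 0 ∧ f = MvPolynomial.C c := by
  let e := MvPolynomial.finSuccEquiv ℝ 1
  obtain ⟨p, hpu, hp⟩ := Polynomial.isUnit_iff.mp (h.map e)
  let e1 := MvPolynomial.finSuccEquiv ℝ 0
  obtain ⟨p0, hp0u, hp0⟩ := Polynomial.isUnit_iff.mp (hpu.map e1)
  obtain ⟨c, rfl⟩ := MvPolynomial.C_surjective (Fin 0) p0
  have hc : c ≠ 0 := by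
    rintro rfl
    simp only [map_zero] at hp0u
    exact not_isUnit_zero hp0u
  have e1C : e1 (MvPolynomial.C c) = Polynomial.C (MvPolynomial.C c) := by
    rw [← MvPolynomial.algebraMap_eq, AlgEquiv.commutes, Polynomial.algebraMap_apply,
      MvPolynomial.algebraMap_eq]
  have hp' : p = MvPolynomial.C c := e1.injective (by rw [e1C]; exact hp0.symm)
  have eC : e (MvPolynomial.C c) = Polynomial.C (MvPolynomial.C c) := by
    rw [← MvPolynomial.algebraMap_eq, AlgEquiv.commutes, Polynomial.algebraMap_apply,
      MvPolynomial.algebraMap_eq]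
  refine ⟨c, hc, e.injective ?_⟩
  rw [eC, ← hp, hp']

/-- Solving for a syzygy in terms of a pair whose cross product is `cc • n`. -/
lemma solve (n s q r : Fin 3 → P) (f1 f2 cc : P) (j : Fin 3) (hj : n j ≠ 0)
    (hs : s 0 * n 0 + s 1 * n 1 + s 2 * n 2 = 0)
    (h1 : ∀ i, cross s q i = f1 * n i)
    (h2 : ∀ i, cross s r i = f2 * n i)
    (h3 : ∀ i, cross q r i = cc * n i)
    (i : Fin 3) : cc * s i = f2 * q i - f1 * r i := by
  have hdet : s 0 * cross q r 0 + s 1 * cross q r 1 + s 2 * cross q r 2 = 0 := by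
    rw [h3 0, h3 1, h3 2]; linear_combination cc * hs
  refine mul_right_cancel₀ hj ?_
  have e : cc * s i * n j - (f2 * q i - f1 * r i) * n j =
      s i * cross q r j - q i * cross s r j + r i * cross s q j := by
    rw [h1 j, h2 j, h3 j]; ring
  rw [det_expand] at e
  split_ifs at e
  · rw [hdet] at e; exact sub_eq_zero.mp e
  · exact sub_eq_zero.mp e

/-- Bilinearity of the cross product with respect to a pair `q, r`. -/
lemma cross_bilin (q r x y : Fin 3 → P) (α β γ δ : P)
    (hx : ∀ k, α * q k + β * r k = x k) (hy : ∀ k, γ * q k + δ * r k = y k) :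
    ∀ i, cross x y i = (α * δ - β * γ) * cross q r i := by
  have H0 : cross x y 0 = (α * δ - β * γ) * cross q r 0 := by
    rw [cross_zero, cross_zero, ← hx 1, ← hx 2, ← hy 1, ← hy 2]; ring
  have H1 : cross x y 1 = (α * δ - β * γ) * cross q r 1 := by
    rw [cross_one, cross_one, ← hx 0, ← hx 2, ← hy 0, ← hy 2]; ring
  have H2 : cross x y 2 = (α * δ - β * γ) * cross q r 2 := by
    rw [cross_two, cross_two, ← hx 0, ← hx 1, ← hy 0, ← hy 1]; ring
  intro i
  fin_cases i
  · exact H0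
  · exact H1
  · exact H2

end SyzAux

open SyzAux MvPolynomial in
theorem syz_basis_iff_cross_eq_const_smul
    (n : Fin 3 → MvPolynomial (Fin 2) ℝ) (hn : n ≠ 0)
    (hgcd : ∀ d : MvPolynomial (Fin 2) ℝ, d ∣ n 0 → d ∣ n 1 → d ∣ n 2 → IsUnit d)
    (q r : Fin 3 → MvPolynomial (Fin 2) ℝ) (hq : q ∈ Syz n) (hr : r ∈ Syz n) :
    (Submodule.span (MvPolynomial (Fin 2) ℝ) {q, r} = Syz n ∧
        LinearIndependent (MvPolynomial (Fin 2) ℝ) ![q, r]) ↔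
    (∃ c : ℝ, c ≠ 0 ∧ cross q r = fun i => MvPolynomial.C c * n i) := by
  have hq' := mem_Syz.mp hq
  have hr' := mem_Syz.mp hr
  obtain ⟨i₀, hi₀'⟩ := Function.ne_iff.mp hn
  have hi₀ : n i₀ ≠ 0 := by simpa using hi₀'
  constructor
  · -- basis → cross q r = c • n
    rintro ⟨hspan, hli⟩
    obtain ⟨f, hf⟩ := cross_eq_smul n hn hgcd q r hq' hr'
    -- f ≠ 0
    have hf0 : f ≠ 0 := by
      intro h0
      have hz : ∀ i, cross q r i = 0 := by
        intro i; rw [hf i, h0, zero_mul]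
      have h12 : q 1 * r 2 = q 2 * r 1 := by
        have := hz 0; rw [cross_zero] at this; linear_combination this
      have h02 : q 0 * r 2 = q 2 * r 0 := by
        have := hz 1; rw [cross_one] at this; linear_combination -this
      have h01 : q 0 * r 1 = q 1 * r 0 := by
        have := hz 2; rw [cross_two] at this; linear_combination this
      have hrel : ∀ i j, q i * r j = q j * r i := by
        intro i j
        fin_cases i <;> fin_cases j <;>
          first
            | rfl
            | exact h01 | exact h01.symm
            | exact h02 | exact h02.symm
            | exact h12 | exact h12.symm
      rw [LinearIndependent.pair_iff] at hli
      by_cases hq0 : q = 0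
      · have := hli 1 0 (by rw [hq0]; simp)
        exact one_ne_zero this.1
      · obtain ⟨j, hj'⟩ := Function.ne_iff.mp hq0
        have hj : q j ≠ 0 := by simpa using hj'
        have := hli (r j) (-(q j))
          (funext fun i => by
            show r j * q i + (-(q j)) * r i = 0
            linear_combination hrel i j)
        exact hj (neg_eq_zero.mp this.2)
    -- f divides each component of n
    have mem0 : (![n 1, -n 0, 0] : Fin 3 → MvPolynomial (Fin 2) ℝ) ∈ Syz n :=
      mem_Syz.mpr (show n 1 * n 0 + -n 0 * n 1 + 0 * n 2 = 0 by ring)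
    have mem1 : (![n 2, 0, -n 0] : Fin 3 → MvPolynomial (Fin 2) ℝ) ∈ Syz n :=
      mem_Syz.mpr (show n 2 * n 0 + 0 * n 1 + -n 0 * n 2 = 0 by ring)
    have mem2 : (![0, n 2, -n 1] : Fin 3 → MvPolynomial (Fin 2) ℝ) ∈ Syz n :=
      mem_Syz.mpr (show 0 * n 0 + n 2 * n 1 + -n 1 * n 2 = 0 by ring)
    obtain ⟨α₀, β₀, hA⟩ := Submodule.mem_span_pair.mp (by rw [hspan]; exact mem0)
    obtain ⟨α₁, β₁, hB⟩ := Submodule.mem_span_pair.mp (by rw [hspan]; exact mem1)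
    obtain ⟨α₂, β₂, hC2⟩ := Submodule.mem_span_pair.mp (by rw [hspan]; exact mem2)
    have hA' : ∀ k, α₀ * q k + β₀ * r k = (![n 1, -n 0, 0] : Fin 3 → _) k :=
      fun k => congrFun hA k
    have hB' : ∀ k, α₁ * q k + β₁ * r k = (![n 2, 0, -n 0] : Fin 3 → _) k :=
      fun k => congrFun hB k
    have hC' : ∀ k, α₂ * q k + β₂ * r k = (![0, n 2, -n 1] : Fin 3 → _) k :=
      fun k => congrFun hC2 k
    have bil01 := cross_bilin q r _ _ α₀ β₀ α₁ β₁ hA' hB'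
    have bil02 := cross_bilin q r _ _ α₀ β₀ α₂ β₂ hA' hC'
    have bil12 := cross_bilin q r _ _ α₁ β₁ α₂ β₂ hB' hC'
    have cv01 : ∀ i, cross ![n 1, -n 0, 0] ![n 2, 0, -n 0] i = n 0 * n i := by
      have K0 : cross ![n 1, -n 0, 0] ![n 2, 0, -n 0] 0 = n 0 * n 0 := by
        show -n 0 * -n 0 - 0 * 0 = n 0 * n 0; ring
      have K1 : cross ![n 1, -n 0, 0] ![n 2, 0, -n 0] 1 = n 0 * n 1 := by
        show 0 * n 2 - n 1 * -n 0 = n 0 * n 1; ring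
      have K2 : cross ![n 1, -n 0, 0] ![n 2, 0, -n 0] 2 = n 0 * n 2 := by
        show n 1 * 0 - -n 0 * n 2 = n 0 * n 2; ring
      intro i; fin_cases i
      · exact K0
      · exact K1
      · exact K2
    have cv02 : ∀ i, cross ![n 1, -n 0, 0] ![0, n 2, -n 1] i = n 1 * n i := by
      have K0 : cross ![n 1, -n 0, 0] ![0, n 2, -n 1] 0 = n 1 * n 0 := by
        show -n 0 * -n 1 - 0 * n 2 = n 1 * n 0; ring
      have K1 : cross ![n 1, -n 0, 0] ![0, n 2, -n 1] 1 = n 1 * n 1 := by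
        show 0 * 0 - n 1 * -n 1 = n 1 * n 1; ring
      have K2 : cross ![n 1, -n 0, 0] ![0, n 2, -n 1] 2 = n 1 * n 2 := by
        show n 1 * n 2 - -n 0 * 0 = n 1 * n 2; ring
      intro i; fin_cases i
      · exact K0
      · exact K1
      · exact K2
    have cv12 : ∀ i, cross ![n 2, 0, -n 0] ![0, n 2, -n 1] i = n 2 * n i := by
      have K0 : cross ![n 2, 0, -n 0] ![0, n 2, -n 1] 0 = n 2 * n 0 := by
        show 0 * -n 1 - -n 0 * n 2 = n 2 * n 0; ring
      have K1 : cross ![n 2, 0, -n 0] ![0, n 2, -n 1] 1 = n 2 * n 1 := by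
        show -n 0 * 0 - n 2 * -n 1 = n 2 * n 1; ring
      have K2 : cross ![n 2, 0, -n 0] ![0, n 2, -n 1] 2 = n 2 * n 2 := by
        show n 2 * n 2 - 0 * 0 = n 2 * n 2; ring
      intro i; fin_cases i
      · exact K0
      · exact K1
      · exact K2
    have hd0 : f ∣ n 0 := by
      have e' : n 0 * n i₀ = ((α₀ * β₁ - β₀ * α₁) * f) * n i₀ := by
        rw [← cv01 i₀, bil01 i₀, hf i₀]; ring
      exact ⟨α₀ * β₁ - β₀ * α₁, by rw [mul_right_cancel₀ hi₀ e']; ring⟩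
    have hd1 : f ∣ n 1 := by
      have e' : n 1 * n i₀ = ((α₀ * β₂ - β₀ * α₂) * f) * n i₀ := by
        rw [← cv02 i₀, bil02 i₀, hf i₀]; ring
      exact ⟨α₀ * β₂ - β₀ * α₂, by rw [mul_right_cancel₀ hi₀ e']; ring⟩
    have hd2 : f ∣ n 2 := by
      have e' : n 2 * n i₀ = ((α₁ * β₂ - β₁ * α₂) * f) * n i₀ := by
        rw [← cv12 i₀, bil12 i₀, hf i₀]; ring
      exact ⟨α₁ * β₂ - β₁ * α₂, by rw [mul_right_cancel₀ hi₀ e']; ring⟩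
    obtain ⟨c, hc, hfc⟩ := exists_C_of_isUnit (hgcd f hd0 hd1 hd2)
    exact ⟨c, hc, funext fun i => by rw [hf i, hfc]⟩
  · -- cross q r = c • n → basis
    rintro ⟨c, hc, hcr⟩
    have hcr' : ∀ i, cross q r i = MvPolynomial.C c * n i := fun i => congrFun hcr i
    have hC : (MvPolynomial.C c : MvPolynomial (Fin 2) ℝ) ≠ 0 :=
      fun h => hc (MvPolynomial.C_injective (Fin 2) ℝ (by rw [h, map_zero]))
    have hcc : (MvPolynomial.C c : MvPolynomial (Fin 2) ℝ) * MvPolynomial.C c⁻¹ = 1 := by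
      rw [← map_mul, mul_inv_cancel₀ hc, map_one]
    constructor
    · -- spanning
      apply le_antisymm
      · rw [Submodule.span_le]
        rintro x hx
        simp only [Set.mem_insert_iff, Set.mem_singleton_iff] at hx
        rcases hx with rfl | rfl
        · exact hq
        · exact hr
      · intro s hs
        have hs' := mem_Syz.mp hs
        obtain ⟨f1, hf1⟩ := cross_eq_smul n hn hgcd s q hs' hq'
        obtain ⟨f2, hf2⟩ := cross_eq_smul n hn hgcd s r hs' hr'
        have hsol := solve n s q r f1 f2 (MvPolynomial.C c) i₀ hi₀ hs' hf1 hf2 hcr'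
        refine Submodule.mem_span_pair.mpr
          ⟨MvPolynomial.C c⁻¹ * f2, -(MvPolynomial.C c⁻¹ * f1), funext fun i => ?_⟩
        show MvPolynomial.C c⁻¹ * f2 * q i + -(MvPolynomial.C c⁻¹ * f1) * r i = s i
        linear_combination (-(MvPolynomial.C c⁻¹)) * hsol i + s i * hcc
    · -- linear independence
      rw [LinearIndependent.pair_iff]
      intro a b hab
      have hab' : ∀ i, a * q i + b * r i = 0 := fun i => congrFun hab i
      have hcr0 : q 1 * r 2 - q 2 * r 1 = MvPolynomial.C c * n 0 := by
        rw [← cross_zero]; exact hcr' 0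
      have hcr1 : q 2 * r 0 - q 0 * r 2 = MvPolynomial.C c * n 1 := by
        rw [← cross_one]; exact hcr' 1
      have hcr2 : q 0 * r 1 - q 1 * r 0 = MvPolynomial.C c * n 2 := by
        rw [← cross_two]; exact hcr' 2
      have nzero : ∀ (x : MvPolynomial (Fin 2) ℝ), x ≠ 0 →
          (∀ k, x * (MvPolynomial.C c * n k) = 0) → False := by
        intro x hx h
        apply hn
        funext k
        have := mul_eq_zero.mp (h k)
        rcases this with h' | h'
        · exact absurd h' hx
        · rcases mul_eq_zero.mp h' with h'' | h''
          · exact absurd h'' hC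
          · simpa using h''
      constructor
      · by_contra ha
        refine nzero a ha ?_
        have K0 : a * (MvPolynomial.C c * n 0) = 0 := by
          linear_combination (-a) * hcr0 + r 2 * hab' 1 - r 1 * hab' 2
        have K1 : a * (MvPolynomial.C c * n 1) = 0 := by
          linear_combination (-a) * hcr1 + r 0 * hab' 2 - r 2 * hab' 0
        have K2 : a * (MvPolynomial.C c * n 2) = 0 := by
          linear_combination (-a) * hcr2 + r 1 * hab' 0 - r 0 * hab' 1
        intro k
        fin_cases k
        · exact K0
        · exact K1
        · exact K2
      · by_contra hb
        refine nzero b hb ?_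
        have K0 : b * (MvPolynomial.C c * n 0) = 0 := by
          linear_combination (-b) * hcr0 + q 1 * hab' 2 - q 2 * hab' 1
        have K1 : b * (MvPolynomial.C c * n 1) = 0 := by
          linear_combination (-b) * hcr1 + q 2 * hab' 0 - q 0 * hab' 2
        have K2 : b * (MvPolynomial.C c * n 2) = 0 := by
          linear_combination (-b) * hcr2 + q 0 * hab' 1 - q 1 * hab' 0
        intro k
        fin_cases k
        · exact K0
        · exact K1
        · exact K2
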